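/- Let φ : F(x,y,z) → G be the homomorphism to the one-relator group G = ⟨a, b | ab⁻¹a²·b·a⁻⁴ = 1⟩ given by x ↦ ab⁻¹a², y ↦ b, z ↦ a⁴. Then φ(z²y) = φ(yz³) in G, although z²y ≠ yz³ in the group ⟨x,y,z | xyz⁻¹ = 1⟩ (which is free on y, z). Hence the induced map ⟨x,y,z | xyz⁻¹=1⟩ → G is not injective. -/

import Mathlib

/-- The one-relator group G = ⟨a, b | ab⁻¹a²·b·a⁻⁴ = 1⟩, generators indexed by
`Fin 2` (0 ↦ a, 1 ↦ b). -/
def higmanRels : Set (FreeGroup (Fin 2)) :=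
  {FreeGroup.of 0 * (FreeGroup.of 1)⁻¹ * (FreeGroup.of 0) ^ 2 * FreeGroup.of 1 *
    ((FreeGroup.of 0) ^ 4)⁻¹}

/-- K = ⟨x, y, z | xyz⁻¹ = 1⟩, generators indexed by `Fin 3` (0 ↦ x, 1 ↦ y, 2 ↦ z). -/
def higmanKRels : Set (FreeGroup (Fin 3)) :=
  {FreeGroup.of 0 * FreeGroup.of 1 * (FreeGroup.of 2)⁻¹}

/-- The substitution x ↦ ab⁻¹a², y ↦ b, z ↦ a⁴ into G. -/
noncomputable def higmanSubst : Fin 3 → PresentedGroup higmanRels :=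
  ![PresentedGroup.of 0 * (PresentedGroup.of 1)⁻¹ * (PresentedGroup.of 0) ^ 2,
    PresentedGroup.of 1, (PresentedGroup.of 0) ^ 4]

lemma higman_rel :
    (PresentedGroup.of 0 : PresentedGroup higmanRels) * (PresentedGroup.of 1)⁻¹ *
      (PresentedGroup.of 0) ^ 2 * PresentedGroup.of 1 * ((PresentedGroup.of 0) ^ 4)⁻¹ = 1 := by
  have h : (PresentedGroup.mk higmanRels) (FreeGroup.of 0 * (FreeGroup.of 1)⁻¹ *
      (FreeGroup.of 0) ^ 2 * FreeGroup.of 1 * ((FreeGroup.of 0) ^ 4)⁻¹) = 1 :=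
    (QuotientGroup.eq_one_iff _).mpr
      (Subgroup.subset_normalClosure (by simp [higmanRels]))
  simpa [PresentedGroup.of] using h

lemma higman_key' (G : Type*) [Group G] (a b : G)
    (hrel : a * b⁻¹ * a ^ 2 * b * (a ^ 4)⁻¹ = 1) :
    a ^ 8 * b = b * a ^ 12 := by
  have h : b⁻¹ * a ^ 2 * b = a ^ 3 := by
    have e : b⁻¹ * a ^ 2 * b = a⁻¹ * (a * b⁻¹ * a ^ 2 * b * (a ^ 4)⁻¹) * a ^ 4 := by group
    rw [e, hrel]; group
  have h2 : a ^ 2 = b * a ^ 3 * b⁻¹ := by rw [← h]; group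
  have h8 : a ^ 8 = (a ^ 2) ^ 4 := by group
  rw [h8, h2, conj_pow, ← pow_mul]
  group

lemma higman_key :
    (PresentedGroup.of 0 : PresentedGroup higmanRels) ^ 8 * PresentedGroup.of 1 =
      PresentedGroup.of 1 * (PresentedGroup.of 0) ^ 12 :=
  higman_key' _ _ _ higman_rel

/-- Under φ : F(x,y,z) → G = ⟨a,b | ab⁻¹a²ba⁻⁴⟩ with x ↦ ab⁻¹a²,
y ↦ b, z ↦ a⁴, we have φ(z²y) = φ(yz³), although z²y ≠ yz³ in K = ⟨x,y,z | xyz⁻¹⟩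
(which is free on y, z); hence any homomorphism K → G induced by this substitution
is not injective. -/
theorem higman_substitution_not_injective :
    (FreeGroup.lift higmanSubst ((FreeGroup.of 2) ^ 2 * FreeGroup.of 1) =
      FreeGroup.lift higmanSubst (FreeGroup.of 1 * (FreeGroup.of 2) ^ 3)) ∧
    ((PresentedGroup.of 2 : PresentedGroup higmanKRels) ^ 2 * PresentedGroup.of 1 ≠
      PresentedGroup.of 1 * (PresentedGroup.of 2) ^ 3) ∧
    (∀ ψ : PresentedGroup higmanKRels →* PresentedGroup higmanRels,
      (∀ i : Fin 3, ψ (PresentedGroup.of i) = higmanSubst i) →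
      ¬ Function.Injective ψ) := by
  have key : (FreeGroup.lift higmanSubst ((FreeGroup.of 2) ^ 2 * FreeGroup.of 1) =
      FreeGroup.lift higmanSubst (FreeGroup.of 1 * (FreeGroup.of 2) ^ 3)) := by
    simp only [map_mul, map_pow, FreeGroup.lift_apply_of, higmanSubst]
    simp only [Matrix.cons_val_one, Matrix.head_cons, Matrix.cons_val_two, Matrix.tail_cons]
    rw [← pow_mul, ← pow_mul]
    exact higman_key
  have ne : ((PresentedGroup.of 2 : PresentedGroup higmanKRels) ^ 2 * PresentedGroup.of 1 ≠
      PresentedGroup.of 1 * (PresentedGroup.of 2) ^ 3) := by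
    intro h
    have hrels : ∀ r ∈ higmanKRels,
        FreeGroup.lift (![Multiplicative.ofAdd (1 : ℤ), 1, Multiplicative.ofAdd 1]) r = 1 := by
      intro r hr
      simp only [higmanKRels, Set.mem_singleton_iff] at hr
      subst hr
      simp
    have h2 := congrArg (PresentedGroup.toGroup hrels) h
    simp only [map_mul, map_pow, PresentedGroup.toGroup.of] at h2
    simp only [Matrix.cons_val_one, Matrix.head_cons, Matrix.cons_val_two,
      Matrix.tail_cons] at h2
    simp [pow_succ] at h2
  refine ⟨key, ne, ?_⟩
  intro ψ hψ hinj
  apply ne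
  apply hinj
  have e1 : ψ ((PresentedGroup.of 2) ^ 2 * PresentedGroup.of 1) =
      (higmanSubst 2) ^ 2 * higmanSubst 1 := by
    simp [map_mul, map_pow, hψ]
  have e2 : ψ (PresentedGroup.of 1 * (PresentedGroup.of 2) ^ 3) =
      higmanSubst 1 * (higmanSubst 2) ^ 3 := by
    simp [map_mul, map_pow, hψ]
  rw [e1, e2]
  simpa only [map_mul, map_pow, FreeGroup.lift_apply_of] using key
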